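/- (Proposition 1(ii).) Assume L ≥ L_f̃ and fix ρ > 0. Let {V^l}_{l≥0} ⊂ S be generated by iterating the algorithmic update V^{l+1} := Proj_S(G(V^l)) (assume every column of each G(V^l) is nonzero). Then the sequence {V^l} is bounded, the sequence of penalized objective values {Φ_ρ(V^l)}_{l≥0} is nonincreasing, and it converges to a finite limit. -/

import Mathlib

open Matrix

noncomputable section

/-- Squared Frobenius norm `‖A‖_F²`. -/
def frobSq {a b : ℕ} (A : Matrix (Fin a) (Fin b) ℝ) : ℝ := ∑ i, ∑ j, A i j ^ 2

/-- Frobenius norm `‖A‖_F`. -/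
def frobNorm {a b : ℕ} (A : Matrix (Fin a) (Fin b) ℝ) : ℝ := Real.sqrt (frobSq A)

/-- Trace (Frobenius) inner product `⟨A,B⟩ = tr(AᵀB)`. -/
def frobInner {a b : ℕ} (A B : Matrix (Fin a) (Fin b) ℝ) : ℝ := ∑ i, ∑ j, A i j * B i j

/-- Squared spectral norm: `sup {‖Vx‖₂² : ‖x‖₂ = 1}`. -/
def specSq {a b : ℕ} (V : Matrix (Fin a) (Fin b) ℝ) : ℝ :=
  sSup {c | ∃ x : Fin b → ℝ, (∑ j, x j ^ 2) = 1 ∧ c = ∑ i, (∑ j, V i j * x j) ^ 2}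

/-- Spectral norm (largest singular value). -/
def specNorm {a b : ℕ} (V : Matrix (Fin a) (Fin b) ℝ) : ℝ := Real.sqrt (specSq V)

/-- Membership in `S`: all columns have unit Euclidean norm. -/
def unitCols {a b : ℕ} (V : Matrix (Fin a) (Fin b) ℝ) : Prop :=
  ∀ j, ∑ i, V i j ^ 2 = 1

/-- Column-wise normalization to unit Euclidean norm (projection onto `S`). -/
def normalizeCols {a b : ℕ} (G : Matrix (Fin a) (Fin b) ℝ) : Matrix (Fin a) (Fin b) ℝ :=
  Matrix.of fun i j => G i j / Real.sqrt (∑ i', G i' j ^ 2)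

/-- `u` is a unit eigenvector of `VᵀV` associated with its largest eigenvalue `lam`
(the Rayleigh-quotient bound states that `lam` is the largest eigenvalue). -/
def isTopEigen {a b : ℕ} (V : Matrix (Fin a) (Fin b) ℝ) (lam : ℝ) (u : Fin b → ℝ) : Prop :=
  (∑ j, u j ^ 2) = 1 ∧ (Vᵀ * V) *ᵥ u = lam • u ∧
    ∀ x : Fin b → ℝ, x ⬝ᵥ ((Vᵀ * V) *ᵥ x) ≤ lam * (x ⬝ᵥ x)

/-- `Γ(V) = −2 V u uᵀ` where `u = u₁(V)`. -/
def GammaOf {a b : ℕ} (V : Matrix (Fin a) (Fin b) ℝ) (u : Fin b → ℝ) :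
    Matrix (Fin a) (Fin b) ℝ := (-2 : ℝ) • (V * vecMulVec u u)

/-- The update direction `G(V) = (2ρ+L)⁻¹ (L V − ∇f̃(V) − ρ Γ(V))`. -/
def Gmap {a b : ℕ} (gradf : Matrix (Fin a) (Fin b) ℝ → Matrix (Fin a) (Fin b) ℝ)
    (ρ L : ℝ) (V : Matrix (Fin a) (Fin b) ℝ) (u : Fin b → ℝ) : Matrix (Fin a) (Fin b) ℝ :=
  (2 * ρ + L)⁻¹ • (L • V - gradf V - ρ • GammaOf V u)

/-- Penalized objective `Φ_ρ(V) = f̃(V) + ρ(‖V‖_F² − ‖V‖²)`. -/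
def Phi {a b : ℕ} (f : Matrix (Fin a) (Fin b) ℝ → ℝ) (ρ : ℝ)
    (V : Matrix (Fin a) (Fin b) ℝ) : ℝ := f V + ρ * (frobSq V - specSq V)

/-- Stationarity residual `𝒢_ρ(V,Γ) = inf_t ‖∇f̃(V) + 2ρV + ρΓ + V·Diag(t)‖_F`. -/
def Gres {a b : ℕ} (gradf : Matrix (Fin a) (Fin b) ℝ → Matrix (Fin a) (Fin b) ℝ) (ρ : ℝ)
    (V Γ : Matrix (Fin a) (Fin b) ℝ) : ℝ :=
  ⨅ t : Fin b → ℝ, frobNorm (gradf V + (2 * ρ) • V + ρ • Γ + V * Matrix.diagonal t)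

/-- The all-ones matrix `E` scaled by `1/√m`. -/
def Escaled (a b : ℕ) : Matrix (Fin a) (Fin b) ℝ :=
  (Real.sqrt a)⁻¹ • Matrix.of fun _ _ => (1 : ℝ)

attribute [local instance] Matrix.frobeniusNormedAddCommGroup Matrix.frobeniusNormedSpace

/-- The continuous linear functional `W ↦ ⟨A, W⟩` (Frobenius pairing); used to state that
`∇f̃` is the gradient of `f̃` with respect to the trace inner product. -/
def frobCLM {a b : ℕ} (A : Matrix (Fin a) (Fin b) ℝ) :
    Matrix (Fin a) (Fin b) ℝ →L[ℝ] ℝ :=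
  LinearMap.toContinuousLinearMap
    { toFun := fun W => frobInner A W
      map_add' := fun W W' => by
        simp [frobInner, Matrix.add_apply, mul_add, Finset.sum_add_distrib]
      map_smul' := fun c W => by
        simp [frobInner, Matrix.smul_apply, smul_eq_mul, Finset.mul_sum, mul_left_comm] }


section AuxLemmas

variable {a b : ℕ}

lemma frobCLM_apply (A W : Matrix (Fin a) (Fin b) ℝ) : frobCLM A W = frobInner A W := rfl

lemma frobSq_nonneg (A : Matrix (Fin a) (Fin b) ℝ) : 0 ≤ frobSq A := by
  apply Finset.sum_nonneg; intro i _; apply Finset.sum_nonneg; intro j _; positivity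

lemma frobNorm_sq (A : Matrix (Fin a) (Fin b) ℝ) : frobNorm A ^ 2 = frobSq A :=
  Real.sq_sqrt (frobSq_nonneg A)

lemma frobInner_self (A : Matrix (Fin a) (Fin b) ℝ) : frobInner A A = frobSq A := by
  simp [frobInner, frobSq, sq]

lemma frobInner_comm (A B : Matrix (Fin a) (Fin b) ℝ) : frobInner A B = frobInner B A := by
  simp [frobInner, mul_comm]

lemma frobInner_sub_left (A B C : Matrix (Fin a) (Fin b) ℝ) :
    frobInner (A - B) C = frobInner A C - frobInner B C := by
  simp [frobInner, Matrix.sub_apply, sub_mul, Finset.sum_sub_distrib]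

lemma frobInner_sub_right (A B C : Matrix (Fin a) (Fin b) ℝ) :
    frobInner A (B - C) = frobInner A B - frobInner A C := by
  simp [frobInner, Matrix.sub_apply, mul_sub, Finset.sum_sub_distrib]

lemma frobInner_smul_left (c : ℝ) (A B : Matrix (Fin a) (Fin b) ℝ) :
    frobInner (c • A) B = c * frobInner A B := by
  simp [frobInner, Matrix.smul_apply, smul_eq_mul, Finset.mul_sum, mul_assoc]

lemma frobSq_prod (A : Matrix (Fin a) (Fin b) ℝ) :
    frobSq A = ∑ ij : Fin a × Fin b, A ij.1 ij.2 ^ 2 := by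
  rw [frobSq]; exact (Fintype.sum_prod_type' ..).symm

lemma frobInner_prod (A B : Matrix (Fin a) (Fin b) ℝ) :
    frobInner A B = ∑ ij : Fin a × Fin b, A ij.1 ij.2 * B ij.1 ij.2 := by
  rw [frobInner]; exact (Fintype.sum_prod_type' ..).symm

lemma abs_frobInner_le (A B : Matrix (Fin a) (Fin b) ℝ) :
    |frobInner A B| ≤ frobNorm A * frobNorm B := by
  have h := Finset.sum_mul_sq_le_sq_mul_sq Finset.univ
    (fun ij : Fin a × Fin b => A ij.1 ij.2) (fun ij => B ij.1 ij.2)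
  calc |frobInner A B| = Real.sqrt ((frobInner A B) ^ 2) := (Real.sqrt_sq_eq_abs _).symm
    _ ≤ Real.sqrt (frobSq A * frobSq B) := by
        apply Real.sqrt_le_sqrt
        rw [frobInner_prod, frobSq_prod, frobSq_prod]; exact h
    _ = frobNorm A * frobNorm B := by
        rw [frobNorm, frobNorm, Real.sqrt_mul (frobSq_nonneg A)]

attribute [local instance] Matrix.frobeniusNormedAddCommGroup Matrix.frobeniusNormedSpace

lemma frobNorm_eq_norm (A : Matrix (Fin a) (Fin b) ℝ) : frobNorm A = ‖A‖ := by
  rw [Matrix.frobenius_norm_def, frobNorm, frobSq, Real.sqrt_eq_rpow]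
  congr 1
  refine Finset.sum_congr rfl fun i _ => Finset.sum_congr rfl fun j _ => ?_
  rw [Real.rpow_two, Real.norm_eq_abs, sq_abs]

lemma continuous_entry (i : Fin a) (j : Fin b) :
    Continuous fun V : Matrix (Fin a) (Fin b) ℝ => V i j := by
  have h : (fun V : Matrix (Fin a) (Fin b) ℝ => V i j)
      = fun V => frobCLM (Matrix.of fun i' j' =>
          if i' = i then if j' = j then (1:ℝ) else 0 else 0) V := by
    funext V
    rw [frobCLM_apply, frobInner]
    simp [Matrix.of_apply, ite_mul, Finset.sum_ite_eq']
  rw [h]; exact (frobCLM _).continuous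

lemma unitCols_normalizeCols (G : Matrix (Fin a) (Fin b) ℝ)
    (h : ∀ j, ∃ i, G i j ≠ 0) : unitCols (normalizeCols G) := by
  intro j
  obtain ⟨i0, hi0⟩ := h j
  have hs : 0 < ∑ i', G i' j ^ 2 :=
    Finset.sum_pos' (fun i _ => sq_nonneg _) ⟨i0, Finset.mem_univ _, by positivity⟩
  simp only [normalizeCols, Matrix.of_apply, div_pow, Real.sq_sqrt hs.le]
  rw [← Finset.sum_div, div_self hs.ne']

lemma frobSq_of_unitCols {V : Matrix (Fin a) (Fin b) ℝ} (h : unitCols V) :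
    frobSq V = b := by
  rw [frobSq, Finset.sum_comm]
  have h' : ∀ j, ∑ i, V i j ^ 2 = 1 := h
  simp [h']

lemma proj_opt (G W : Matrix (Fin a) (Fin b) ℝ) (h : ∀ j, ∃ i, G i j ≠ 0)
    (hW : unitCols W) : frobInner G W ≤ frobInner G (normalizeCols G) := by
  rw [frobInner, frobInner, Finset.sum_comm,
    Finset.sum_comm (s := (Finset.univ : Finset (Fin a)))]
  apply Finset.sum_le_sum
  intro j _
  obtain ⟨i0, hi0⟩ := h j
  have hs : 0 < ∑ i', G i' j ^ 2 :=
    Finset.sum_pos' (fun i _ => sq_nonneg _) ⟨i0, Finset.mem_univ _, by positivity⟩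
  have h1 : ∑ i, G i j * W i j ≤ Real.sqrt (∑ i', G i' j ^ 2) := by
    have hcs := Finset.sum_mul_sq_le_sq_mul_sq Finset.univ (fun i => G i j) (fun i => W i j)
    rw [hW j, mul_one] at hcs
    calc ∑ i, G i j * W i j ≤ |∑ i, G i j * W i j| := le_abs_self _
      _ = Real.sqrt ((∑ i, G i j * W i j) ^ 2) := (Real.sqrt_sq_eq_abs _).symm
      _ ≤ Real.sqrt (∑ i', G i' j ^ 2) := Real.sqrt_le_sqrt hcs
  have h2 : ∑ i, G i j * normalizeCols G i j = Real.sqrt (∑ i', G i' j ^ 2) := by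
    simp only [normalizeCols, Matrix.of_apply, ← mul_div_assoc]
    rw [← Finset.sum_div]
    rw [show ∑ i, G i j * G i j = ∑ i', G i' j ^ 2 from by simp [sq]]
    exact Real.div_sqrt
  rw [h2]; exact h1

lemma rayleigh_eq (V : Matrix (Fin a) (Fin b) ℝ) (x : Fin b → ℝ) :
    x ⬝ᵥ ((Vᵀ * V) *ᵥ x) = ∑ i, (∑ j, V i j * x j) ^ 2 := by
  rw [← Matrix.mulVec_mulVec, Matrix.dotProduct_mulVec, Matrix.vecMul_transpose]
  simp [dotProduct, Matrix.mulVec, sq]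

lemma rayleigh_le_frobSq (W : Matrix (Fin a) (Fin b) ℝ) (x : Fin b → ℝ)
    (hx : (∑ j, x j ^ 2) = 1) : ∑ i, (∑ j, W i j * x j) ^ 2 ≤ frobSq W := by
  rw [frobSq]
  apply Finset.sum_le_sum
  intro i _
  have := Finset.sum_mul_sq_le_sq_mul_sq Finset.univ (fun j => W i j) x
  rwa [hx, mul_one] at this

lemma bddAbove_rayleighSet (W : Matrix (Fin a) (Fin b) ℝ) :
    BddAbove {c | ∃ x : Fin b → ℝ, (∑ j, x j ^ 2) = 1 ∧
      c = ∑ i, (∑ j, W i j * x j) ^ 2} := by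
  refine ⟨frobSq W, ?_⟩
  rintro c ⟨x, hx, rfl⟩
  exact rayleigh_le_frobSq W x hx

lemma specSq_ge (W : Matrix (Fin a) (Fin b) ℝ) (u : Fin b → ℝ)
    (hu : (∑ j, u j ^ 2) = 1) : ∑ i, (∑ j, W i j * u j) ^ 2 ≤ specSq W :=
  le_csSup (bddAbove_rayleighSet W) ⟨u, hu, rfl⟩

lemma specSq_le_frobSq (W : Matrix (Fin a) (Fin b) ℝ) (u : Fin b → ℝ)
    (hu : (∑ j, u j ^ 2) = 1) : specSq W ≤ frobSq W := by
  have hne : Set.Nonempty {c | ∃ x : Fin b → ℝ, (∑ j, x j ^ 2) = 1 ∧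
      c = ∑ i, (∑ j, W i j * x j) ^ 2} := ⟨∑ i, (∑ j, W i j * u j) ^ 2, u, hu, rfl⟩
  rw [specSq]
  apply csSup_le hne
  rintro c ⟨x, hx, rfl⟩
  exact rayleigh_le_frobSq W x hx

lemma dotProduct_self_eq (u : Fin b → ℝ) : u ⬝ᵥ u = ∑ j, u j ^ 2 := by
  simp [dotProduct, sq]

lemma specSq_eq_of_top {V : Matrix (Fin a) (Fin b) ℝ} {lam : ℝ} {u : Fin b → ℝ}
    (h : isTopEigen V lam u) : specSq V = lam := by
  obtain ⟨hu, heq, hbd⟩ := h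
  apply IsGreatest.csSup_eq
  constructor
  · refine ⟨u, hu, ?_⟩
    rw [← rayleigh_eq, heq, dotProduct_smul, smul_eq_mul, dotProduct_self_eq, hu, mul_one]
  · rintro c ⟨x, hx, rfl⟩
    have := hbd x
    rw [rayleigh_eq, dotProduct_self_eq, hx, mul_one] at this
    exact this

lemma rayleigh_top_val {V : Matrix (Fin a) (Fin b) ℝ} {lam : ℝ} {u : Fin b → ℝ}
    (h : isTopEigen V lam u) : ∑ i, (∑ j, V i j * u j) ^ 2 = lam := by
  obtain ⟨hu, heq, _⟩ := h
  rw [← rayleigh_eq, heq, dotProduct_smul, smul_eq_mul, dotProduct_self_eq, hu, mul_one]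

lemma frobInner_Gamma (V : Matrix (Fin a) (Fin b) ℝ) (u : Fin b → ℝ)
    (D : Matrix (Fin a) (Fin b) ℝ) :
    frobInner (GammaOf V u) D
      = -2 * ∑ i, (∑ k, V i k * u k) * (∑ j, D i j * u j) := by
  rw [frobInner, Finset.mul_sum]
  refine Finset.sum_congr rfl fun i _ => ?_
  simp only [GammaOf, Matrix.smul_apply, Matrix.mul_apply, Matrix.vecMulVec_apply,
    smul_eq_mul]
  rw [Finset.mul_sum, Finset.mul_sum]
  refine Finset.sum_congr rfl fun j _ => ?_
  rw [Finset.sum_mul, Finset.mul_sum, Finset.mul_sum]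
  rw [Finset.sum_mul]
  ring_nf
  refine Finset.sum_congr rfl fun k _ => ?_
  ring

end AuxLemmas


lemma frobNorm_nonneg {a b : ℕ} (A : Matrix (Fin a) (Fin b) ℝ) : 0 ≤ frobNorm A :=
  Real.sqrt_nonneg _

/-- Descent lemma for `L`-smooth functions w.r.t. the Frobenius structure. -/
lemma descent_lemma {a b : ℕ} (ftilde : Matrix (Fin a) (Fin b) ℝ → ℝ)
    (gradf : Matrix (Fin a) (Fin b) ℝ → Matrix (Fin a) (Fin b) ℝ) (Lf : ℝ) (hLf : 0 < Lf)
    (hderiv : ∀ W, HasFDerivAt ftilde (frobCLM (gradf W)) W)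
    (hlip : ∀ W W', frobNorm (gradf W - gradf W') ≤ Lf * frobNorm (W - W'))
    (V d : Matrix (Fin a) (Fin b) ℝ) :
    ftilde (V + d) ≤ ftilde V + frobInner (gradf V) d + Lf / 2 * frobSq d := by
  have hpath : ∀ t : ℝ, HasDerivAt (fun s : ℝ => V + s • d) d t := by
    intro t
    have h := ((hasDerivAt_id t).smul_const d).const_add V
    simp only [one_smul] at h
    exact h
  have hg : ∀ t : ℝ, HasDerivAt (fun s => ftilde (V + s • d))
      (frobInner (gradf (V + t • d)) d) t := by
    intro t
    have h1 := (hderiv (V + t • d)).comp_hasDerivAt t (hpath t)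
    exact h1
  have hgc : Continuous fun t : ℝ => frobInner (gradf (V + t • d)) d := by
    have hlipg : LipschitzWith (Real.toNNReal Lf) gradf := by
      apply LipschitzWith.of_dist_le_mul
      intro x y
      rw [dist_eq_norm, dist_eq_norm, ← frobNorm_eq_norm, ← frobNorm_eq_norm,
        Real.coe_toNNReal Lf hLf.le]
      exact hlip x y
    have h1 : Continuous fun t : ℝ => gradf (V + t • d) :=
      hlipg.continuous.comp (continuous_const.add (continuous_id.smul continuous_const))
    have h2 : (fun t : ℝ => frobInner (gradf (V + t • d)) d)
        = fun t => frobCLM d (gradf (V + t • d)) := by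
      funext t; rw [frobCLM_apply, frobInner_comm]
    rw [h2]
    exact (frobCLM d).continuous.comp h1
  have hint : ftilde (V + d) - ftilde V
      = ∫ t in (0:ℝ)..1, frobInner (gradf (V + t • d)) d := by
    have h := intervalIntegral.integral_eq_sub_of_hasDerivAt
      (f := fun s : ℝ => ftilde (V + s • d)) (fun t _ => hg t)
      (hgc.intervalIntegrable 0 1)
    simpa using h.symm
  have hbound : ∀ t ∈ Set.Icc (0:ℝ) 1,
      frobInner (gradf (V + t • d)) d ≤ frobInner (gradf V) d + Lf * t * frobSq d := by
    intro t ht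
    have h1 : frobInner (gradf (V + t • d)) d - frobInner (gradf V) d
        = frobInner (gradf (V + t • d) - gradf V) d := (frobInner_sub_left _ _ _).symm
    have h2 : frobInner (gradf (V + t • d) - gradf V) d
        ≤ frobNorm (gradf (V + t • d) - gradf V) * frobNorm d :=
      (le_abs_self _).trans (abs_frobInner_le _ _)
    have h3 : frobNorm (gradf (V + t • d) - gradf V) ≤ Lf * (t * frobNorm d) := by
      have h4 := hlip (V + t • d) V
      have h5 : V + t • d - V = t • d := by abel
      rw [h5] at h4
      rwa [frobNorm_eq_norm (t • d), norm_smul, Real.norm_eq_abs, abs_of_nonneg ht.1,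
        ← frobNorm_eq_norm] at h4
    have h7 := mul_le_mul_of_nonneg_right h3 (frobNorm_nonneg d)
    have h6 : Lf * (t * frobNorm d) * frobNorm d = Lf * t * frobSq d := by
      rw [← frobNorm_sq]; ring
    linarith
  have hmono : (∫ t in (0:ℝ)..1, frobInner (gradf (V + t • d)) d)
      ≤ ∫ t in (0:ℝ)..1, (frobInner (gradf V) d + Lf * t * frobSq d) := by
    apply intervalIntegral.integral_mono_on (by norm_num)
      (hgc.intervalIntegrable 0 1)
      ((continuous_const.add ((continuous_const.mul continuous_id).mul
        continuous_const)).intervalIntegrable 0 1)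
    exact hbound
  have hval : (∫ t in (0:ℝ)..1, (frobInner (gradf V) d + Lf * t * frobSq d))
      = frobInner (gradf V) d + Lf / 2 * frobSq d := by
    have heq : (fun t : ℝ => frobInner (gradf V) d + Lf * t * frobSq d)
        = fun t : ℝ => frobInner (gradf V) d + (Lf * frobSq d) * t := by
      funext t; ring
    have h1 : IntervalIntegrable (fun _ : ℝ => frobInner (gradf V) d)
        MeasureTheory.volume 0 1 := continuous_const.intervalIntegrable 0 1
    have h2 : IntervalIntegrable (fun t : ℝ => (Lf * frobSq d) * t)
        MeasureTheory.volume 0 1 :=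
      (continuous_const.mul continuous_id').intervalIntegrable 0 1
    rw [heq, intervalIntegral.integral_add h1 h2,
      intervalIntegral.integral_const, intervalIntegral.integral_const_mul,
      integral_id]
    norm_num
    ring
  linarith

set_option maxHeartbeats 1000000 in
/-- Proposition 1(ii). For the iterates of the inner solver with `L ≥ L_f̃`,
the sequence `{V^l}` is bounded, and `{Φ_ρ(V^l)}` is nonincreasing and converges to a
finite limit. -/
theorem dcra_iterates_bounded_merit_converges (m p : ℕ)
    (ftilde : Matrix (Fin m) (Fin p) ℝ → ℝ)
    (gradf : Matrix (Fin m) (Fin p) ℝ → Matrix (Fin m) (Fin p) ℝ)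
    (Lf : ℝ) (hLf : 0 < Lf)
    (hderiv : ∀ W : Matrix (Fin m) (Fin p) ℝ, HasFDerivAt ftilde (frobCLM (gradf W)) W)
    (hlip : ∀ W W' : Matrix (Fin m) (Fin p) ℝ,
      frobNorm (gradf W - gradf W') ≤ Lf * frobNorm (W - W'))
    (ρ L : ℝ) (hρ : 0 < ρ) (hL : Lf ≤ L)
    (Vseq : ℕ → Matrix (Fin m) (Fin p) ℝ) (useq : ℕ → Fin p → ℝ) (lamseq : ℕ → ℝ)
    (hV0 : unitCols (Vseq 0))
    (htop : ∀ l, isTopEigen (Vseq l) (lamseq l) (useq l))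
    (hcol : ∀ l j, ∃ i, Gmap gradf ρ L (Vseq l) (useq l) i j ≠ 0)
    (hstep : ∀ l, Vseq (l + 1) = normalizeCols (Gmap gradf ρ L (Vseq l) (useq l))) :
    (∃ Cb : ℝ, ∀ l, frobNorm (Vseq l) ≤ Cb) ∧
    (∀ l, Phi ftilde ρ (Vseq (l + 1)) ≤ Phi ftilde ρ (Vseq l)) ∧
    (∃ c : ℝ, Filter.Tendsto (fun l => Phi ftilde ρ (Vseq l)) Filter.atTop (nhds c)) := by
  -- all iterates have unit columns
  have hunit : ∀ l, unitCols (Vseq l) := by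
    intro l
    induction l with
    | zero => exact hV0
    | succ n _ => rw [hstep n]; exact unitCols_normalizeCols _ (hcol n)
  have hfSq : ∀ l, frobSq (Vseq l) = p := fun l => frobSq_of_unitCols (hunit l)
  -- descent of the merit function
  have hdesc : ∀ l, Phi ftilde ρ (Vseq (l + 1)) ≤ Phi ftilde ρ (Vseq l) := by
    intro l
    set V := Vseq l with hVdef
    set W := Vseq (l + 1) with hWd
    set u := useq l with hud
    set lam := lamseq l with hlamd
    set Gm := Gmap gradf ρ L V u with hGmd
    have hWdef : W = normalizeCols Gm := hstep l
    have hfV : frobSq V = p := hfSq l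
    have hfW : frobSq W = p := hfSq (l + 1)
    have hpos : (0:ℝ) < 2 * ρ + L := by linarith
    -- projection optimality
    have hproj : frobInner Gm V ≤ frobInner Gm W := by
      rw [hWdef]; exact proj_opt Gm V (hcol l) (hunit l)
    have h1 : 0 ≤ frobInner Gm (W - V) := by
      rw [frobInner_sub_right]; linarith
    have h2 : frobInner Gm (W - V) = (2 * ρ + L)⁻¹ *
        (L * frobInner V (W - V) - frobInner (gradf V) (W - V)
          - ρ * frobInner (GammaOf V u) (W - V)) := by
      rw [hGmd, Gmap, frobInner_smul_left, frobInner_sub_left, frobInner_sub_left,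
        frobInner_smul_left, frobInner_smul_left]
    have hkey : frobInner (gradf V) (W - V) + ρ * frobInner (GammaOf V u) (W - V)
        ≤ L * frobInner V (W - V) := by
      have h4 := mul_nonneg hpos.le (h2 ▸ h1)
      rw [← mul_assoc, mul_inv_cancel₀ hpos.ne', one_mul] at h4
      linarith
    -- geometric identities
    have hVd : frobInner V (W - V) = frobInner V W - p := by
      rw [frobInner_sub_right, frobInner_self, hfV]
    have hd2 : frobSq (W - V) = 2 * p - 2 * frobInner V W := by
      rw [← frobInner_self, frobInner_sub_left, frobInner_sub_right, frobInner_sub_right,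
        frobInner_self, frobInner_self, frobInner_comm W V, hfW, hfV]
      ring
    -- descent lemma
    have hdl : ftilde W ≤ ftilde V + frobInner (gradf V) (W - V)
        + Lf / 2 * frobSq (W - V) := by
      have h := descent_lemma ftilde gradf Lf hLf hderiv hlip V (W - V)
      rwa [show V + (W - V) = W from by abel] at h
    -- spectral part
    have hlam : specSq V = lam := specSq_eq_of_top (htop l)
    have htopval : ∑ i, (∑ j, V i j * u j) ^ 2 = lam := rayleigh_top_val (htop l)
    have hsplit : ∀ i, (∑ j, (W - V) i j * u j)
        = (∑ j, W i j * u j) - (∑ j, V i j * u j) := by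
      intro i; simp [Matrix.sub_apply, sub_mul, Finset.sum_sub_distrib]
    have hGam : frobInner (GammaOf V u) (W - V)
        = -2 * ((∑ i, (∑ k, V i k * u k) * (∑ j, W i j * u j)) - lam) := by
      rw [frobInner_Gamma]
      rw [← htopval]
      congr 1
      rw [← Finset.sum_sub_distrib]
      refine Finset.sum_congr rfl fun i _ => ?_
      rw [hsplit i]
      ring
    set S : ℝ := ∑ i, (∑ k, V i k * u k) * (∑ j, W i j * u j) with hSd
    have hWspec : 2 * S - lam ≤ specSq W := by
      have hge := specSq_ge W u (htop l).1
      have hptw : ∀ i ∈ Finset.univ, 2 * ((∑ k, V i k * u k) * (∑ j, W i j * u j))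
          - (∑ k, V i k * u k) ^ 2 ≤ (∑ j, W i j * u j) ^ 2 := fun i _ => by
        nlinarith [sq_nonneg ((∑ j, W i j * u j) - (∑ k, V i k * u k))]
      have hsum := Finset.sum_le_sum hptw
      rw [Finset.sum_sub_distrib, htopval, ← Finset.mul_sum, ← hSd] at hsum
      linarith
    -- assemble
    have hq : 0 ≤ frobSq (W - V) := frobSq_nonneg _
    have hLq : 0 ≤ (L - Lf) * frobSq (W - V) := mul_nonneg (by linarith) hq
    have hgam2 : ρ * (lam - specSq W) ≤ ρ * frobInner (GammaOf V u) (W - V) := by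
      apply mul_le_mul_of_nonneg_left _ hρ.le
      rw [hGam]; linarith
    rw [mul_sub] at hgam2
    have hsumzero : 2 * frobInner V (W - V) + frobSq (W - V) = 0 := by
      rw [hVd, hd2]; ring
    have hLvw : L * frobInner V (W - V) = -(L / 2 * frobSq (W - V)) := by
      linear_combination (L / 2) * hsumzero
    have hLfq : Lf / 2 * frobSq (W - V) ≤ L / 2 * frobSq (W - V) :=
      mul_le_mul_of_nonneg_right (by linarith) hq
    unfold Phi
    rw [hfV, hfW, hlam, mul_sub, mul_sub]
    linarith [hdl, hkey, hLvw, hLfq, hgam2]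
  refine ⟨⟨Real.sqrt p, fun l => by rw [frobNorm, hfSq l]⟩, hdesc, ?_⟩
  -- lower bound via compactness
  have hfc : Continuous ftilde := continuous_iff_continuousAt.2 fun W => (hderiv W).continuousAt
  have hKclosed : IsClosed {V : Matrix (Fin m) (Fin p) ℝ | unitCols V} := by
    have hset : {V : Matrix (Fin m) (Fin p) ℝ | unitCols V}
        = ⋂ j, {V : Matrix (Fin m) (Fin p) ℝ | (∑ i, V i j ^ 2) = 1} := by
      ext V
      constructor
      · intro h; exact Set.mem_iInter.2 fun j => h j
      · intro h j; exact Set.mem_iInter.1 h j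
    rw [hset]
    refine isClosed_iInter fun j => ?_
    exact isClosed_eq (continuous_finset_sum _ fun i _ => (continuous_entry i j).pow 2)
      continuous_const
  have hKbdd : Bornology.IsBounded {V : Matrix (Fin m) (Fin p) ℝ | unitCols V} := by
    rw [isBounded_iff_forall_norm_le]
    refine ⟨Real.sqrt p, fun V hV => le_of_eq ?_⟩
    rw [← frobNorm_eq_norm, frobNorm, frobSq_of_unitCols hV]
  obtain ⟨Vm, hVmK, hVmin⟩ := (Metric.isCompact_of_isClosed_isBounded hKclosed
    hKbdd).exists_isMinOn ⟨Vseq 0, hV0⟩ hfc.continuousOn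
  have hlb : ∀ l, ftilde Vm ≤ Phi ftilde ρ (Vseq l) := by
    intro l
    have h1 := specSq_le_frobSq (Vseq l) (useq l) (htop l).1
    have h2 : ftilde Vm ≤ ftilde (Vseq l) := hVmin (hunit l)
    have h3 : 0 ≤ frobSq (Vseq l) - specSq (Vseq l) := by linarith
    have h4 := mul_nonneg hρ.le h3
    unfold Phi
    linarith
  have hanti : Antitone fun l => Phi ftilde ρ (Vseq l) := antitone_nat_of_succ_le hdesc
  refine ⟨⨅ l, Phi ftilde ρ (Vseq l), tendsto_atTop_ciInf hanti ⟨ftilde Vm, ?_⟩⟩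
  rintro x ⟨l, rfl⟩
  exact hlb l


end
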